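/- Let 1 < α < 2 and ε > 0. There exists a constant C > 0, depending only on α and ε, such that for every real N ≥ 1, all integers k₂ ≠ k₃ with |k₂| ≤ 4N and |k₃| ≤ 4N, and every μ ∈ ℝ: #{k₁ ∈ ℤ : N/2 < |k₁| ≤ N and |Φ_{k₁,k₂,k₃} − μ| ≤ N^ε} ≤ C N^ε (1 + N^{2−α}/(1 + |k₂ − k₃|)). In particular the bound is uniform in μ. -/

import Mathlib

/-- The resonance function `Φ_{k₁,k₂,k₃} = |k₁|^α − |k₂|^α + |k₃|^α − |k₁−k₂+k₃|^α`. -/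
noncomputable def resPhi (α : ℝ) (k₁ k₂ k₃ : ℤ) : ℝ :=
  |(k₁ : ℝ)| ^ α - |(k₂ : ℝ)| ^ α + |(k₃ : ℝ)| ^ α - |((k₁ - k₂ + k₃ : ℤ) : ℝ)| ^ α

open Real in

lemma rpow_concave_gap {β a b : ℝ} (hβ0 : 0 < β) (hβ1 : β < 1) (ha : 0 < a) (hab : a ≤ b) :
    β * b^(β-1) * (b - a) ≤ b^β - a^β := by
  rcases eq_or_lt_of_le hab with rfl | hab'
  · simp
  · have hcont : ContinuousOn (fun x : ℝ => x ^ β) (Set.Icc a b) := by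
      intro x hx
      exact (Real.continuousAt_rpow_const x β (Or.inl (by linarith [hx.1]))).continuousWithinAt
    have hderiv : ∀ x ∈ Set.Ioo a b, HasDerivAt (fun x : ℝ => x ^ β) (β * x ^ (β-1)) x := by
      intro x hx
      exact Real.hasDerivAt_rpow_const (Or.inl (by linarith [hx.1]))
    obtain ⟨c, hc, hcs⟩ := exists_hasDerivAt_eq_slope (fun x : ℝ => x ^ β)
      (fun x => β * x ^ (β-1)) hab' hcont hderiv
    have hc0 : 0 < c := lt_trans ha hc.1
    have hcb : b ^ (β-1) ≤ c ^ (β-1) :=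
      Real.rpow_le_rpow_of_nonpos hc0 hc.2.le (by linarith)
    have hba : 0 < b - a := by linarith
    have heq : b ^ β - a ^ β = β * c ^ (β-1) * (b - a) := by
      field_simp at hcs
      linarith
    rw [heq]
    have := mul_le_mul_of_nonneg_right (mul_le_mul_of_nonneg_left hcb hβ0.le) hba.le
    linarith

-- pointwise derivative difference bound, m ≥ 1
lemma ptwise_pos (α : ℝ) (hα₁ : 1 < α) (hα₂ : α < 2) {N t m : ℝ} (hN : 1 ≤ N) (hm : 1 ≤ m)
    (hm8 : m ≤ 8*N) (ht1 : N/2 < t) (ht2 : t ≤ N) (c0 : ℝ)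
    (hc1 : c0 ≤ α*(α-1)/9) (hc2 : c0 ≤ α*(1-(2:ℝ)^(1-α))*(2:ℝ)^(1-α)/8) (hc0 : 0 < c0) :
    c0 * m * N^(α-2) ≤ α * |t|^(α-2) * t - α * |t-m|^(α-2) * (t-m) := by
  have hN0 : (0:ℝ) < N := by linarith
  have ht0 : 0 < t := by linarith
  have hA : (0:ℝ) < N^(α-2) := Real.rpow_pos_of_pos hN0 _
  have hexp : α - 2 + 1 = α - 1 := by ring
  have e1 : α * |t|^(α-2) * t = α * t^(α-1) := by
    rw [abs_of_pos ht0, mul_assoc, ← Real.rpow_add_one ht0.ne', hexp]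
  have htN : N^(α-2) ≤ t^(α-2) := Real.rpow_le_rpow_of_nonpos ht0 ht2 (by linarith)
  rcases le_or_gt m (t/2) with hcase | hcase
  · -- s = t - m ≥ t/2 > 0
    have hs0 : 0 < t - m := by linarith
    have e2 : α * |t-m|^(α-2) * (t-m) = α * (t-m)^(α-1) := by
      rw [abs_of_pos hs0, mul_assoc, ← Real.rpow_add_one hs0.ne', hexp]
    rw [e1, e2, ← mul_sub]
    have key : (α-1) * t^(α-2) * m ≤ t^(α-1) - (t-m)^(α-1) := by
      have h := rpow_concave_gap (β := α-1) (a := t-m) (b := t)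
        (by linarith) (by linarith) hs0 (by linarith)
      have he2 : α - 1 - 1 = α - 2 := by ring
      rw [he2] at h
      have : t - (t - m) = m := by ring
      rw [this] at h
      exact h
    have ht2' : 0 ≤ t^(α-2) := by positivity
    have h1 : c0 * m * N^(α-2) ≤ α * ((α-1) * t^(α-2) * m) := by
      have hc : c0 ≤ α * (α-1) := by nlinarith
      calc c0 * m * N^(α-2) ≤ c0 * m * t^(α-2) := by
            have := mul_le_mul_of_nonneg_left htN (by nlinarith : (0:ℝ) ≤ c0 * m)
            linarith
        _ ≤ (α*(α-1)) * m * t^(α-2) := by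
            have := mul_le_mul_of_nonneg_right
              (mul_le_mul_of_nonneg_right hc (by linarith : (0:ℝ) ≤ m)) ht2'
            linarith
        _ = α * ((α-1) * t^(α-2) * m) := by ring
    have hα0 : 0 < α := by linarith
    nlinarith [key, h1]
  · -- m > t/2, so t - m < t/2
    have hth : (0:ℝ) < t/2 := by linarith
    have hd2 : α * |t-m|^(α-2) * (t-m) ≤ α * (t/2)^(α-1) := by
      have hpos : 0 < α * (t/2)^(α-1) := by
        have := Real.rpow_pos_of_pos hth (α-1); nlinarith
      rcases le_or_gt (t-m) 0 with hs | hs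
      · have h1 : 0 ≤ α * |t-m|^(α-2) := by positivity
        nlinarith [mul_nonpos_of_nonneg_of_nonpos h1 hs]
      · have e2 : α * |t-m|^(α-2) * (t-m) = α * (t-m)^(α-1) := by
          rw [abs_of_pos hs, mul_assoc, ← Real.rpow_add_one hs.ne', hexp]
        rw [e2]
        have : (t-m)^(α-1) ≤ (t/2)^(α-1) :=
          Real.rpow_le_rpow hs.le (by linarith) (by linarith)
        nlinarith
    rw [e1]
    have hα0 : 0 < α := by linarith
    have hneg : (1:ℝ) - α = -(α-1) := by ring
    have h2inv : (2:ℝ)^(1-α) = ((2:ℝ)^(α-1))⁻¹ := by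
      rw [hneg, Real.rpow_neg (by norm_num)]
    have h2p : (0:ℝ) < (2:ℝ)^(α-1) := Real.rpow_pos_of_pos two_pos _
    have e3 : (t/2)^(α-1) = t^(α-1) * (2:ℝ)^(1-α) := by
      rw [Real.div_rpow ht0.le (by norm_num), h2inv, div_eq_mul_inv]
    have eN : (N/2)^(α-1) = N^(α-1) * (2:ℝ)^(1-α) := by
      rw [Real.div_rpow hN0.le (by norm_num), h2inv, div_eq_mul_inv]
    have htN1 : (N/2)^(α-1) ≤ t^(α-1) := Real.rpow_le_rpow (by linarith) (by linarith) (by linarith)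
    have eNN : N^(α-2) * N = N^(α-1) := by
      rw [← Real.rpow_add_one hN0.ne', hexp]
    have hNpow : 0 < N^(α-1) := Real.rpow_pos_of_pos hN0 _
    have htpow : 0 < t^(α-1) := Real.rpow_pos_of_pos ht0 _
    have h2 : (2:ℝ)^(1-α) < 1 := Real.rpow_lt_one_of_one_lt_of_neg one_lt_two (by linarith)
    have h2' : 0 < (2:ℝ)^(1-α) := Real.rpow_pos_of_pos two_pos _
    -- c0 m N^{α-2} ≤ 8 c0 N^{α-1} ≤ α(1-2^{1-α})2^{1-α} N^{α-1} ≤ α(1-2^{1-α}) (N/2)^{α-1}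
    --   ≤ α(1-2^{1-α}) t^{α-1} = α t^{α-1} - α t^{α-1} 2^{1-α} ≤ α t^{α-1} - α(t/2)^{α-1}
    have step1 : c0 * m * N^(α-2) ≤ 8 * c0 * N^(α-1) := by
      calc c0 * m * N^(α-2) ≤ c0 * (8*N) * N^(α-2) := by
            have := mul_le_mul_of_nonneg_right (mul_le_mul_of_nonneg_left hm8 hc0.le) hA.le
            linarith
        _ = 8 * c0 * (N^(α-2) * N) := by ring
        _ = 8 * c0 * N^(α-1) := by rw [eNN]
    have step2 : 8 * c0 * N^(α-1) ≤ α*(1-(2:ℝ)^(1-α)) * ((2:ℝ)^(1-α) * N^(α-1)) := by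
      have h8 : 8 * c0 ≤ α*(1-(2:ℝ)^(1-α)) * (2:ℝ)^(1-α) := by linarith
      have := mul_le_mul_of_nonneg_right h8 hNpow.le
      linarith
    have step3 : α*(1-(2:ℝ)^(1-α)) * ((2:ℝ)^(1-α) * N^(α-1)) ≤ α*(1-(2:ℝ)^(1-α)) * t^(α-1) := by
      have hco : 0 ≤ α*(1-(2:ℝ)^(1-α)) := mul_nonneg hα0.le (by linarith)
      have h' : (2:ℝ)^(1-α) * N^(α-1) ≤ t^(α-1) := by rw [mul_comm, ← eN]; exact htN1
      exact mul_le_mul_of_nonneg_left h' hco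
    have step4 : α*(1-(2:ℝ)^(1-α)) * t^(α-1) ≤ α * t^(α-1) - α * (t/2)^(α-1) := by
      rw [e3]; exact le_of_eq (by ring)
    linarith

-- pointwise derivative difference bound, shift s ≥ 1 upward
lemma ptwise_neg (α : ℝ) (hα₁ : 1 < α) (hα₂ : α < 2) {N t s : ℝ} (hN : 1 ≤ N) (hs : 1 ≤ s)
    (hs8 : s ≤ 8*N) (ht1 : N/2 < t) (ht2 : t ≤ N) (c0 : ℝ)
    (hc1 : c0 ≤ α*(α-1)/9) (hc0 : 0 < c0) :
    c0 * s * N^(α-2) ≤ α * |t+s|^(α-2) * (t+s) - α * |t|^(α-2) * t := by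
  have hN0 : (0:ℝ) < N := by linarith
  have ht0 : 0 < t := by linarith
  have hts : 0 < t + s := by linarith
  have hexp : α - 2 + 1 = α - 1 := by ring
  have e1 : α * |t|^(α-2) * t = α * t^(α-1) := by
    rw [abs_of_pos ht0, mul_assoc, ← Real.rpow_add_one ht0.ne', hexp]
  have e2 : α * |t+s|^(α-2) * (t+s) = α * (t+s)^(α-1) := by
    rw [abs_of_pos hts, mul_assoc, ← Real.rpow_add_one hts.ne', hexp]
  rw [e1, e2, ← mul_sub]
  have key : (α-1) * (t+s)^(α-2) * s ≤ (t+s)^(α-1) - t^(α-1) := by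
    have h := rpow_concave_gap (β := α-1) (a := t) (b := t+s)
      (by linarith) (by linarith) ht0 (by linarith)
    have he2 : α - 1 - 1 = α - 2 := by ring
    rw [he2] at h
    have he3 : t + s - t = s := by ring
    rw [he3] at h
    exact h
  have h9 : (9:ℝ)⁻¹ * N^(α-2) ≤ (t+s)^(α-2) := by
    have h1 : (t+s)^(α-2) ≥ (9*N)^(α-2) :=
      Real.rpow_le_rpow_of_nonpos hts (by linarith) (by linarith)
    have h2 : (9*N)^(α-2) = (9:ℝ)^(α-2) * N^(α-2) :=
      Real.mul_rpow (by norm_num) hN0.le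
    have h3 : (9:ℝ)⁻¹ ≤ (9:ℝ)^(α-2) := by
      have := Real.rpow_le_rpow_of_exponent_le (by norm_num : (1:ℝ) ≤ 9)
        (by linarith : (-1:ℝ) ≤ α-2)
      rwa [Real.rpow_neg_one] at this
    have hA : (0:ℝ) < N^(α-2) := Real.rpow_pos_of_pos hN0 _
    have := mul_le_mul_of_nonneg_right h3 hA.le
    linarith
  have hα1 : 0 < α - 1 := by linarith
  have hA : (0:ℝ) < N^(α-2) := Real.rpow_pos_of_pos hN0 _
  have step : c0 * s * N^(α-2) ≤ α * ((α-1) * (t+s)^(α-2) * s) := by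
    have h1 : c0 * s * N^(α-2) ≤ (α*(α-1)/9) * s * N^(α-2) := by
      have := mul_le_mul_of_nonneg_right (mul_le_mul_of_nonneg_right hc1 (by linarith : (0:ℝ) ≤ s)) hA.le
      linarith
    have h2 : (α*(α-1)/9) * s * N^(α-2) = (α*(α-1)) * s * ((9:ℝ)⁻¹ * N^(α-2)) := by ring
    have h3 : (α*(α-1)) * s * ((9:ℝ)⁻¹ * N^(α-2)) ≤ (α*(α-1)) * s * (t+s)^(α-2) := by
      have := mul_le_mul_of_nonneg_left h9
        (by nlinarith : (0:ℝ) ≤ (α*(α-1)) * s)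
      linarith
    calc c0 * s * N^(α-2) ≤ (α*(α-1)/9) * s * N^(α-2) := h1
      _ = (α*(α-1)) * s * ((9:ℝ)⁻¹ * N^(α-2)) := h2
      _ ≤ (α*(α-1)) * s * (t+s)^(α-2) := h3
      _ = α * ((α-1) * (t+s)^(α-2) * s) := by ring
  have hα0 : 0 < α := by linarith
  calc c0 * s * N^(α-2) ≤ α * ((α-1) * (t+s)^(α-2) * s) := step
    _ ≤ α * ((t+s)^(α-1) - t^(α-1)) := mul_le_mul_of_nonneg_left key hα0.le

lemma gap_abs (α : ℝ) (hα₁ : 1 < α) (hα₂ : α < 2) {N x y m : ℝ} (hN : 1 ≤ N)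
    (hm : 1 ≤ |m|) (hm8 : |m| ≤ 8*N) (hx : N/2 < x) (hxy : x < y) (hy : y ≤ N) (c0 : ℝ)
    (hc1 : c0 ≤ α*(α-1)/9) (hc2 : c0 ≤ α*(1-(2:ℝ)^(1-α))*(2:ℝ)^(1-α)/8) (hc0 : 0 < c0) :
    c0 * |m| * N^(α-2) * (y - x) ≤
      |(|y|^α - |y-m|^α) - (|x|^α - |x-m|^α)| := by
  set F : ℝ → ℝ := fun u => |u|^α - |u-m|^α with hF
  set F' : ℝ → ℝ := fun u => α*|u|^(α-2)*u - α*|u-m|^(α-2)*(u-m) with hF'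
  have hder : ∀ u : ℝ, HasDerivAt F (F' u) u := by
    intro u
    have h1 : HasDerivAt (fun v : ℝ => |v|^α) (α*|u|^(α-2)*u) u := hasDerivAt_abs_rpow u hα₁
    have h2 : HasDerivAt (fun v : ℝ => |v-m|^α) (α*|u-m|^(α-2)*(u-m)) u := by
      have := (hasDerivAt_abs_rpow (u-m) hα₁).comp u ((hasDerivAt_id u).sub_const m)
      simpa [Function.comp_def] using this
    exact h1.sub h2
  obtain ⟨c, hc, hcs⟩ := exists_hasDerivAt_eq_slope F F' hxy
    (fun u _ => (hder u).continuousAt.continuousWithinAt) (fun u _ => hder u)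
  have hyx : 0 < y - x := by linarith
  have heq : F y - F x = F' c * (y - x) := by
    field_simp at hcs
    linarith
  have hc1' : N/2 < c := lt_trans hx hc.1
  have hc2' : c ≤ N := le_of_lt (lt_of_lt_of_le hc.2 hy)
  rcases le_or_gt 0 m with hm0 | hm0
  · -- m ≥ 1
    have hm1 : 1 ≤ m := by rwa [abs_of_nonneg hm0] at hm
    have hm8' : m ≤ 8*N := by rwa [abs_of_nonneg hm0] at hm8
    have hpt : c0 * m * N^(α-2) ≤ F' c :=
      ptwise_pos α hα₁ hα₂ hN hm1 hm8' hc1' hc2' c0 hc1 hc2 hc0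
    have : c0 * m * N^(α-2) * (y-x) ≤ F y - F x := by
      rw [heq]
      exact mul_le_mul_of_nonneg_right hpt hyx.le
    rw [abs_of_nonneg hm0]
    calc c0 * m * N^(α-2) * (y-x) ≤ F y - F x := this
      _ ≤ |F y - F x| := le_abs_self _
  · -- m < 0, s = -m ≥ 1
    set s : ℝ := -m with hs
    have habs : |m| = s := abs_of_neg hm0
    have hs1 : 1 ≤ s := by rwa [habs] at hm
    have hs8 : s ≤ 8*N := by rwa [habs] at hm8
    have hpt : c0 * s * N^(α-2) ≤ α*|c+s|^(α-2)*(c+s) - α*|c|^(α-2)*c :=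
      ptwise_neg α hα₁ hα₂ hN hs1 hs8 hc1' hc2' c0 hc1 hc0
    have hF'c : F' c ≤ -(c0 * s * N^(α-2)) := by
      have : F' c = α*|c|^(α-2)*c - α*|c+s|^(α-2)*(c+s) := by
        simp only [hF', hs]; ring_nf
      rw [this]; linarith
    have : c0 * s * N^(α-2) * (y-x) ≤ -(F y - F x) := by
      rw [heq]
      have := mul_le_mul_of_nonneg_right hF'c hyx.le
      nlinarith
    rw [habs]
    calc c0 * s * N^(α-2) * (y-x) ≤ -(F y - F x) := this
      _ ≤ |F y - F x| := neg_le_abs _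

lemma ncard_le_of_bdd_diff {T : Set ℤ} {D : ℝ} (hD : 0 ≤ D)
    (h : ∀ a ∈ T, ∀ b ∈ T, (a:ℝ) - (b:ℝ) ≤ D) : (T.ncard : ℝ) ≤ 2*D + 1 := by
  rcases T.eq_empty_or_nonempty with rfl | ⟨a, ha⟩
  · simp; linarith
  · set d : ℤ := ⌊D⌋ with hd
    have hd0 : 0 ≤ d := Int.le_floor.mpr (by simpa using hD)
    have hsub : T ⊆ Set.Icc (a-d) (a+d) := by
      intro b hb
      constructor
      · have h1 : (a:ℝ) - b ≤ D := h a ha b hb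
        have : (a - b : ℤ) ≤ d := Int.le_floor.mpr (by push_cast; linarith)
        linarith
      · have h1 : (b:ℝ) - a ≤ D := h b hb a ha
        have : (b - a : ℤ) ≤ d := Int.le_floor.mpr (by push_cast; linarith)
        linarith
    have hfin : (Set.Icc (a-d) (a+d)).Finite := Set.finite_Icc _ _
    have hcard : T.ncard ≤ (Set.Icc (a-d) (a+d)).ncard := Set.ncard_le_ncard hsub hfin
    have hIcc : (Set.Icc (a-d) (a+d)).ncard = (Finset.Icc (a-d) (a+d)).card := by
      rw [← Finset.coe_Icc, Set.ncard_coe_finset]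
    have hval : (Finset.Icc (a-d) (a+d)).card = ((a+d) + 1 - (a-d)).toNat := Int.card_Icc _ _
    have : ((a+d) + 1 - (a-d)).toNat = (2*d+1).toNat := by congr 1; ring
    have hfloor : (d:ℝ) ≤ D := Int.floor_le D
    have : (T.ncard : ℝ) ≤ ((2*d+1 : ℤ) : ℝ) := by
      rw [hIcc, hval, this] at hcard
      have h2 : ((2*d+1).toNat : ℤ) = 2*d+1 := Int.toNat_of_nonneg (by linarith)
      exact_mod_cast le_trans (Nat.cast_le.mpr hcard)
        (le_of_eq (by exact_mod_cast congrArg Int.cast h2))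
    push_cast at this
    linarith

lemma count_pos (α : ℝ) (hα₁ : 1 < α) (hα₂ : α < 2) {N : ℝ} (hN : 1 ≤ N) {m : ℤ}
    (hm : m ≠ 0) (hm8 : |(m:ℝ)| ≤ 8*N) (μ δ : ℝ) (hδ : 0 ≤ δ) (c0 : ℝ)
    (hc1 : c0 ≤ α*(α-1)/9) (hc2 : c0 ≤ α*(1-(2:ℝ)^(1-α))*(2:ℝ)^(1-α)/8) (hc0 : 0 < c0) :
    (({j : ℤ | N/2 < (j:ℝ) ∧ (j:ℝ) ≤ N ∧
        |(|(j:ℝ)|^α - |((j - m : ℤ):ℝ)|^α - μ)| ≤ δ}).ncard : ℝ)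
      ≤ 4*δ/(c0 * |(m:ℝ)| * N^(α-2)) + 1 := by
  have hN0 : (0:ℝ) < N := by linarith
  have hA : (0:ℝ) < N^(α-2) := Real.rpow_pos_of_pos hN0 _
  have hmR : 1 ≤ |(m:ℝ)| := by
    have : (1:ℤ) ≤ |m| := Int.one_le_abs hm
    calc (1:ℝ) ≤ ((|m| : ℤ) : ℝ) := by exact_mod_cast this
      _ = |(m:ℝ)| := by push_cast; ring
  have hden : 0 < c0 * |(m:ℝ)| * N^(α-2) := by positivity
  set D : ℝ := 2*δ/(c0 * |(m:ℝ)| * N^(α-2)) with hD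
  have hD0 : 0 ≤ D := by positivity
  have key := ncard_le_of_bdd_diff (T := {j : ℤ | N/2 < (j:ℝ) ∧ (j:ℝ) ≤ N ∧
        |(|(j:ℝ)|^α - |((j - m : ℤ):ℝ)|^α - μ)| ≤ δ}) hD0 ?_
  · calc _ ≤ 2*D + 1 := key
      _ = 4*δ/(c0 * |(m:ℝ)| * N^(α-2)) + 1 := by rw [hD]; ring
  · intro a ha b hb
    simp only [Set.mem_setOf_eq] at ha hb
    rcases le_or_gt a b with hab | hab
    · have : (a:ℝ) ≤ (b:ℝ) := by exact_mod_cast hab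
      linarith
    · have hba : (b:ℝ) < (a:ℝ) := by exact_mod_cast hab
      have hgap := gap_abs α hα₁ hα₂ (m := (m:ℝ)) hN hmR hm8 hb.1 hba ha.2.1 c0 hc1 hc2 hc0
      have hcast : ∀ j : ℤ, |((j - m : ℤ):ℝ)| = |(j:ℝ) - (m:ℝ)| := by intro j; push_cast; ring_nf
      have ha3 := ha.2.2; have hb3 := hb.2.2
      rw [hcast] at ha3 hb3
      have htri : |(|(a:ℝ)|^α - |(a:ℝ)-(m:ℝ)|^α) - (|(b:ℝ)|^α - |(b:ℝ)-(m:ℝ)|^α)| ≤ 2*δ := by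
        have := abs_sub_abs_le_abs_sub ((|(a:ℝ)|^α - |(a:ℝ)-(m:ℝ)|^α) - μ)
          ((|(b:ℝ)|^α - |(b:ℝ)-(m:ℝ)|^α) - μ)
        have h2 := abs_sub ((|(a:ℝ)|^α - |(a:ℝ)-(m:ℝ)|^α) - μ)
          ((|(b:ℝ)|^α - |(b:ℝ)-(m:ℝ)|^α) - μ)
        calc |(|(a:ℝ)|^α - |(a:ℝ)-(m:ℝ)|^α) - (|(b:ℝ)|^α - |(b:ℝ)-(m:ℝ)|^α)|
            = |((|(a:ℝ)|^α - |(a:ℝ)-(m:ℝ)|^α) - μ) - ((|(b:ℝ)|^α - |(b:ℝ)-(m:ℝ)|^α) - μ)| := by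
              congr 1; ring
          _ ≤ |(|(a:ℝ)|^α - |(a:ℝ)-(m:ℝ)|^α) - μ| + |(|(b:ℝ)|^α - |(b:ℝ)-(m:ℝ)|^α) - μ| := by
              rw [sub_eq_add_neg]
              exact (abs_add_le _ _).trans (by rw [abs_neg])
          _ ≤ 2*δ := by linarith
      have hfinal : c0 * |(m:ℝ)| * N^(α-2) * ((a:ℝ) - (b:ℝ)) ≤ 2*δ := le_trans hgap htri
      rw [hD, le_div_iff₀ hden]
      linarith

/-- **Counting lemma (comparable frequencies regime).**
For `1 < α < 2` and `ε > 0` there is `C > 0` such that for all `N ≥ 1`,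
all `k₂ ≠ k₃` with `|k₂|, |k₃| ≤ 4N`, and all `μ ∈ ℝ`:
`#{k₁ : N/2 < |k₁| ≤ N, |Φ_{k₁,k₂,k₃} − μ| ≤ N^ε} ≤ C N^ε (1 + N^{2−α}/(1+|k₂−k₃|))`. -/
theorem stmt4 (α ε : ℝ) (hα₁ : 1 < α) (hα₂ : α < 2) (hε : 0 < ε) :
    ∃ C > 0, ∀ N : ℝ, 1 ≤ N → ∀ k₂ k₃ : ℤ, k₂ ≠ k₃ →
      |(k₂ : ℝ)| ≤ 4 * N → |(k₃ : ℝ)| ≤ 4 * N → ∀ μ : ℝ,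
      (({k₁ : ℤ | N / 2 < |(k₁ : ℝ)| ∧ |(k₁ : ℝ)| ≤ N ∧
          |resPhi α k₁ k₂ k₃ - μ| ≤ N ^ ε}.ncard : ℝ)) ≤
        C * N ^ ε * (1 + N ^ (2 - α) / (1 + |((k₂ - k₃ : ℤ) : ℝ)|)) := by
  have h2 : (2:ℝ)^(1-α) < 1 := Real.rpow_lt_one_of_one_lt_of_neg one_lt_two (by linarith)
  have h2' : 0 < (2:ℝ)^(1-α) := Real.rpow_pos_of_pos two_pos _
  set c0 : ℝ := min (α*(α-1)/9) (α*(1-(2:ℝ)^(1-α))*(2:ℝ)^(1-α)/8) with hc0def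
  have hc0 : 0 < c0 := by
    apply lt_min
    · have h1 : (0:ℝ) < α - 1 := by linarith
      have hα0 : (0:ℝ) < α := by linarith
      positivity
    · have h1 : (0:ℝ) < 1 - (2:ℝ)^(1-α) := by linarith
      have hα0 : (0:ℝ) < α := by linarith
      positivity
  have hc1 : c0 ≤ α*(α-1)/9 := min_le_left _ _
  have hc2 : c0 ≤ α*(1-(2:ℝ)^(1-α))*(2:ℝ)^(1-α)/8 := min_le_right _ _
  refine ⟨2 + 16/c0, by positivity, ?_⟩
  intro N hN k₂ k₃ hk hk2 hk3 μ
  have hN0 : (0:ℝ) < N := by linarith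
  set m : ℤ := k₂ - k₃ with hm
  have hmne : m ≠ 0 := sub_ne_zero.mpr hk
  have hm8 : |(m:ℝ)| ≤ 8*N := by
    have hmc : (m:ℝ) = (k₂:ℝ) - (k₃:ℝ) := by rw [hm]; push_cast; ring
    rw [hmc, sub_eq_add_neg]
    calc |(k₂:ℝ) + -(k₃:ℝ)| ≤ |(k₂:ℝ)| + |(-(k₃:ℝ))| := abs_add_le _ _
      _ = |(k₂:ℝ)| + |(k₃:ℝ)| := by rw [abs_neg]
      _ ≤ 8*N := by linarith
  set μ₀ : ℝ := μ + |(k₂:ℝ)|^α - |(k₃:ℝ)|^α with hμ₀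
  set δ : ℝ := N^ε with hδ
  have hδ0 : 0 ≤ δ := le_of_lt (Real.rpow_pos_of_pos hN0 _)
  have hδ1 : 1 ≤ δ := Real.one_le_rpow hN hε.le
  set T₁ : Set ℤ := {j : ℤ | N/2 < (j:ℝ) ∧ (j:ℝ) ≤ N ∧
      |(|(j:ℝ)|^α - |((j - m : ℤ):ℝ)|^α - μ₀)| ≤ δ} with hT₁
  set T₂ : Set ℤ := {j : ℤ | N/2 < (j:ℝ) ∧ (j:ℝ) ≤ N ∧
      |(|(j:ℝ)|^α - |((j - (-m) : ℤ):ℝ)|^α - μ₀)| ≤ δ} with hT₂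
  set S : Set ℤ := {k₁ : ℤ | N / 2 < |(k₁ : ℝ)| ∧ |(k₁ : ℝ)| ≤ N ∧
      |resPhi α k₁ k₂ k₃ - μ| ≤ N ^ ε} with hS
  -- resPhi rewrite
  have hres : ∀ k₁ : ℤ, resPhi α k₁ k₂ k₃ - μ = |(k₁:ℝ)|^α - |((k₁ - m : ℤ):ℝ)|^α - μ₀ := by
    intro k₁
    have : k₁ - k₂ + k₃ = k₁ - m := by rw [hm]; ring
    rw [resPhi, this, hμ₀]; ring
  -- inclusion
  have hsub : S ⊆ T₁ ∪ (fun j => -j) '' T₂ := by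
    intro k₁ hk₁
    obtain ⟨h1, h2, h3⟩ := hk₁
    rw [hres k₁] at h3
    rcases lt_trichotomy k₁ 0 with hneg | hzero | hpos
    · right
      refine ⟨-k₁, ?_, by simp⟩
      have hcast : |(k₁:ℝ)| = ((-k₁ : ℤ) : ℝ) := by
        rw [abs_of_neg (by exact_mod_cast hneg)]; push_cast; ring
      refine ⟨by rw [← hcast]; exact h1, by rw [← hcast]; exact h2, ?_⟩
      have e1 : |((-k₁ : ℤ):ℝ)| = |(k₁:ℝ)| := by push_cast; rw [abs_neg]
      have e2 : |((-k₁ - (-m) : ℤ):ℝ)| = |((k₁ - m : ℤ):ℝ)| := by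
        push_cast
        rw [show -(k₁:ℝ) - -(m:ℝ) = -((k₁:ℝ) - (m:ℝ)) by ring, abs_neg]
      rw [e1, e2]
      exact h3
    · exfalso
      rw [hzero] at h1
      simp at h1
      linarith
    · left
      have hcast : |(k₁:ℝ)| = (k₁ : ℝ) := abs_of_pos (by exact_mod_cast hpos)
      exact ⟨by rw [← hcast]; exact h1, by rw [← hcast]; exact h2, h3⟩
  -- finiteness
  have hfinT : ∀ T : Set ℤ, (∀ j ∈ T, N/2 < (j:ℝ) ∧ (j:ℝ) ≤ N) → T.Finite := by
    intro T hT
    apply Set.Finite.subset (Set.finite_Icc 0 ⌊N⌋)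
    intro j hj
    obtain ⟨hj1, hj2⟩ := hT j hj
    constructor
    · have : (0:ℝ) < (j:ℝ) := by linarith
      exact_mod_cast this.le
    · exact Int.le_floor.mpr hj2
  have hT₁fin : T₁.Finite := hfinT T₁ (fun j hj => ⟨hj.1, hj.2.1⟩)
  have hT₂fin : T₂.Finite := hfinT T₂ (fun j hj => ⟨hj.1, hj.2.1⟩)
  -- cardinality chain
  have hcard1 : (S.ncard : ℝ) ≤ (T₁.ncard : ℝ) + (T₂.ncard : ℝ) := by
    have hU : (T₁ ∪ (fun j : ℤ => -j) '' T₂).Finite := hT₁fin.union (hT₂fin.image _)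
    have h1 : S.ncard ≤ (T₁ ∪ (fun j : ℤ => -j) '' T₂).ncard := Set.ncard_le_ncard hsub hU
    have h2 : (T₁ ∪ (fun j : ℤ => -j) '' T₂).ncard ≤ T₁.ncard + ((fun j : ℤ => -j) '' T₂).ncard :=
      Set.ncard_union_le _ _
    have h3 : ((fun j : ℤ => -j) '' T₂).ncard = T₂.ncard :=
      Set.ncard_image_of_injective _ neg_injective
    push_cast
    rw [h3] at h2
    exact_mod_cast le_trans h1 h2
  have hmm : |((-m : ℤ):ℝ)| = |(m:ℝ)| := by push_cast; rw [abs_neg]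
  have hcnt1 : (T₁.ncard : ℝ) ≤ 4*δ/(c0 * |(m:ℝ)| * N^(α-2)) + 1 :=
    count_pos α hα₁ hα₂ hN hmne hm8 μ₀ δ hδ0 c0 hc1 hc2 hc0
  have hcnt2 : (T₂.ncard : ℝ) ≤ 4*δ/(c0 * |(m:ℝ)| * N^(α-2)) + 1 := by
    have := count_pos α hα₁ hα₂ hN (neg_ne_zero.mpr hmne) (by rw [hmm]; exact hm8) μ₀ δ hδ0
      c0 hc1 hc2 hc0
    rw [hmm] at this
    exact this
  -- final arithmetic
  have hA : (0:ℝ) < N^(α-2) := Real.rpow_pos_of_pos hN0 _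
  have hQ : N^(2-α) = (N^(α-2))⁻¹ := by
    rw [show (2-α) = -(α-2) by ring, Real.rpow_neg hN0.le]
  have hB1 : 1 ≤ |(m:ℝ)| := by
    have : (1:ℤ) ≤ |m| := Int.one_le_abs hmne
    calc (1:ℝ) ≤ ((|m| : ℤ) : ℝ) := by exact_mod_cast this
      _ = |(m:ℝ)| := by push_cast; ring
  set B : ℝ := |(m:ℝ)| with hBdef
  set A : ℝ := N^(α-2) with hAdef
  set P : ℝ := δ
  have hB0 : (0:ℝ) < B := by linarith
  have h1B : (0:ℝ) < 1 + B := by linarith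
  have hP1 : 1 ≤ P := hδ1
  have hP0 : 0 < P := by linarith
  have key : 4*P/(c0 * B * A) ≤ 8/c0 * P * (A⁻¹/(1+B)) := by
    rw [div_le_iff₀ (by positivity)]
    have e1 : 8/c0 * P * (A⁻¹/(1+B)) * (c0 * B * A) = 8*P*B/(1+B) := by
      field_simp
    rw [e1, le_div_iff₀ h1B]
    nlinarith
  have expand : (2 + 16/c0) * P * (1 + N^(2-α)/(1+B)) =
      2*P + 2*P*(A⁻¹/(1+B)) + 16/c0*P + 16/c0 * P * (A⁻¹/(1+B)) := by
    rw [hQ]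
    field_simp
    ring
  have hnn1 : 0 ≤ 2*P*(A⁻¹/(1+B)) := by positivity
  have hnn2 : 0 ≤ 16/c0*P := by positivity
  calc (S.ncard : ℝ) ≤ (T₁.ncard : ℝ) + (T₂.ncard : ℝ) := hcard1
    _ ≤ (4*P/(c0 * B * A) + 1) + (4*P/(c0 * B * A) + 1) := by
        exact add_le_add hcnt1 hcnt2
    _ = 2*(4*P/(c0 * B * A)) + 2 := by ring
    _ ≤ 2*(8/c0 * P * (A⁻¹/(1+B))) + 2*P := by
        have := mul_le_mul_of_nonneg_left key (by norm_num : (0:ℝ) ≤ 2)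
        linarith
    _ ≤ (2 + 16/c0) * P * (1 + N^(2-α)/(1+B)) := by
        rw [expand]
        have e : 2*(8/c0 * P * (A⁻¹/(1+B))) = 16/c0 * P * (A⁻¹/(1+B)) := by ring
        linarith
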